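/- Let I ⊆ {1,…,n} with |I| ≥ 2, let a = (a_1,…,a_n) be positive integers, and r an integer. Then ∑_{i ∈ I} ∑_{∅ ≠ J ⊆ I∖{i}} (−1)^{|J|+1} q^{∑_{j=i+1}^{n} a_j + L_{I∖{i},J}(a^{(i)})} · (1−q^{a_i})(1−q^{a_J}) / ((1−q^{|a|−a_i+r})(1−q^{|a|−a_i−a_J+r})) = ∑_{∅ ≠ J ⊆ I} (−1)^{|J|} q^{L_{I,J}(a)} (1−q^{a_J}) / (1−q^{|a|−a_J+r}), as an identity of rational functions in q. -/

import Mathlib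

open Finset

/-- The indeterminate `q` in the field of rational functions `ℚ(q)`. -/
noncomputable def q : RatFunc ℚ := RatFunc.X

/-- `L_{I,J}(a) = ∑_{(u,v) : u ∈ I, u ≤ v ≤ n, v ∉ J} a_v`. -/
def Lsum {n : ℕ} (I J : Finset (Fin n)) (a : Fin n → ℤ) : ℤ :=
  ∑ u ∈ I, ∑ v ∈ Finset.univ.filter (fun v => u ≤ v ∧ v ∉ J), a v

/-- `L_{I∖{i},J}(a^{(i)}) = ∑_{(u,v) : u ∈ I∖{i}, u ≤ v ≤ n, v ∉ J, v ≠ i} a_v`. -/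
def LsumDel {n : ℕ} (i : Fin n) (I J : Finset (Fin n)) (a : Fin n → ℤ) : ℤ :=
  ∑ u ∈ I.erase i, ∑ v ∈ Finset.univ.filter (fun v => u ≤ v ∧ v ∉ J ∧ v ≠ i), a v

/-! ### Auxiliary lemmas -/

lemma q_ne : q ≠ 0 := RatFunc.X_ne_zero

lemma one_sub_qpow_ne {e : ℤ} (he : 0 < e) : (1 : RatFunc ℚ) - q ^ e ≠ 0 := by
  intro h
  have h1 : q ^ e = 1 := by linear_combination -h
  lift e to ℕ using he.le with m
  rw [zpow_natCast] at h1
  have hm : m ≠ 0 := by exact_mod_cast he.ne'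
  have hX : (RatFunc.X : RatFunc ℚ) ^ m = algebraMap (Polynomial ℚ) _ (Polynomial.X ^ m) := by
    simp [RatFunc.algebraMap_X]
  rw [q, hX] at h1
  have h2 : (Polynomial.X ^ m : Polynomial ℚ) = 1 := by
    apply RatFunc.algebraMap_injective ℚ
    simpa using h1
  have := congrArg Polynomial.natDegree h2
  simp [Polynomial.natDegree_X_pow] at this
  exact hm this

lemma q_zpow_sum {ι : Type*} (s : Finset ι) (f : ι → ℤ) :
    q ^ (∑ i ∈ s, f i) = ∏ i ∈ s, q ^ f i := by
  classical
  induction s using Finset.induction with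
  | empty => simp
  | @insert a s' h ih => rw [Finset.sum_insert h, Finset.prod_insert h, zpow_add₀ q_ne, ih]

/-- Partial fraction decomposition key identity. -/
lemma pf_key (C X Y Z W : RatFunc ℚ) (hZ : 1 - Z ≠ 0) (hW : 1 - W ≠ 0) (hYW : Y * W = Z) :
    C * ((1 - X) * (1 - Y)) / ((1 - Z) * (1 - W))
      = C * (1 - X) / (1 - W) + (-(C * Y)) * (1 - X) / (1 - Z) := by
  subst hYW
  field_simp
  ring

lemma LsumDel_diff {n : ℕ} (i : Fin n) (I J : Finset (Fin n)) (a : Fin n → ℤ)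
    (hJ : J ⊆ I.erase i) :
    LsumDel i I J a
      = LsumDel i I ∅ a - ∑ j ∈ J, (((I.erase i).filter (fun u => u ≤ j)).card : ℤ) * a j := by
  classical
  have key : ∀ u ∈ I.erase i,
      (∑ v ∈ Finset.univ.filter (fun v => u ≤ v ∧ v ∉ (∅ : Finset (Fin n)) ∧ v ≠ i), a v)
        = (∑ v ∈ Finset.univ.filter (fun v => u ≤ v ∧ v ∉ J ∧ v ≠ i), a v)
          + ∑ v ∈ J, (if u ≤ v then a v else 0) := by
    intro u hu
    rw [Finset.sum_filter, Finset.sum_filter]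
    rw [show (∑ v ∈ J, (if u ≤ v then a v else 0))
        = ∑ v : Fin n, (if v ∈ J then (if u ≤ v then a v else 0) else 0) by
      rw [Finset.sum_ite_mem, Finset.univ_inter]]
    rw [← Finset.sum_add_distrib]
    apply Finset.sum_congr rfl
    intro v _
    by_cases h2 : v ∈ J
    · have hvi : v ≠ i := Finset.ne_of_mem_erase (hJ h2)
      by_cases h1 : u ≤ v <;> simp [h1, h2, hvi]
    · by_cases h1 : u ≤ v <;> simp [h1, h2]
  unfold LsumDel
  rw [Finset.sum_congr rfl key, Finset.sum_add_distrib, Finset.sum_comm]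
  have : ∀ j ∈ J, (∑ u ∈ I.erase i, (if u ≤ j then a j else 0))
      = (((I.erase i).filter (fun u => u ≤ j)).card : ℤ) * a j := by
    intro j _
    rw [← Finset.sum_filter, Finset.sum_const, nsmul_eq_mul]
  rw [Finset.sum_congr rfl this]
  ring

lemma Lsum_singleton {n : ℕ} (i : Fin n) (I : Finset (Fin n)) (a : Fin n → ℤ) (hi : i ∈ I) :
    Lsum I {i} a = (∑ j ∈ Finset.univ.filter (fun j => i < j), a j) + LsumDel i I ∅ a := by
  classical
  unfold Lsum LsumDel
  rw [← Finset.add_sum_erase _ _ hi]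
  congr 1
  · apply Finset.sum_congr _ (fun _ _ => rfl)
    ext v
    simp [lt_iff_le_and_ne, eq_comm, and_comm]
  · apply Finset.sum_congr rfl
    intro u _
    apply Finset.sum_congr _ (fun _ _ => rfl)
    ext v
    simp

lemma exponent_A {n : ℕ} (i : Fin n) (I J : Finset (Fin n)) (a : Fin n → ℤ)
    (hi : i ∈ I) (hJ : J ⊆ I.erase i) :
    (∑ j ∈ Finset.univ.filter (fun j => i < j), a j) + LsumDel i I J a
      = Lsum I (insert i J) a + ∑ v ∈ (insert i J).filter (fun v => i < v), a v := by
  classical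
  have hiJ : i ∉ J := fun h => (Finset.ne_of_mem_erase (hJ h)) rfl
  set K := insert i J with hK
  have h1 : Lsum I K a
      = (∑ v ∈ Finset.univ.filter (fun v => i ≤ v ∧ v ∉ K), a v) + LsumDel i I J a := by
    unfold Lsum LsumDel
    rw [← Finset.add_sum_erase _ _ hi]
    congr 1
    apply Finset.sum_congr rfl
    intro u _
    apply Finset.sum_congr _ (fun _ _ => rfl)
    ext v
    simp only [Finset.mem_filter, Finset.mem_univ, true_and, hK, Finset.mem_insert]
    tauto
  have h2 : (∑ j ∈ Finset.univ.filter (fun j => i < j), a j)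
      = (∑ v ∈ Finset.univ.filter (fun v => i ≤ v ∧ v ∉ K), a v)
        + ∑ v ∈ K.filter (fun v => i < v), a v := by
    have hKf : K.filter (fun v => i < v) = Finset.univ.filter (fun v => i < v ∧ v ∈ K) := by
      ext v; simp [and_comm]
    rw [hKf, Finset.sum_filter, Finset.sum_filter, Finset.sum_filter, ← Finset.sum_add_distrib]
    apply Finset.sum_congr rfl
    intro v _
    have hiK : i ∈ K := Finset.mem_insert_self _ _
    by_cases h1 : i < v <;> by_cases h2 : v ∈ K
    · simp [h1, h2, not_lt_of_gt h1]
    · simp [h1, h2, h1.le]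
    · simp [h1, h2]
    · have hvi : ¬ i ≤ v := by
        intro hle
        rcases eq_or_lt_of_le hle with h | h
        · exact h2 (h ▸ hiK)
        · exact h1 h
      simp [h1, h2, hvi]
  omega

lemma telescope {n : ℕ} (a : Fin n → ℤ) (K : Finset (Fin n)) :
    ∑ i ∈ K, (q ^ (∑ v ∈ K.filter (fun v => i < v), a v) * (1 - q ^ a i))
      = 1 - q ^ (∑ v ∈ K, a v) := by
  classical
  induction K using Finset.induction_on_min with
  | empty => simp
  | insert b s hb ih =>
    have hbs : b ∉ s := fun h => lt_irrefl b (hb b h)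
    rw [Finset.sum_insert hbs]
    have hterm : ∀ i ∈ s, (insert b s).filter (fun v => i < v) = s.filter (fun v => i < v) := by
      intro i hi
      rw [Finset.filter_insert, if_neg (not_lt_of_gt (hb i hi))]
    have hsum : ∑ i ∈ s, (q ^ (∑ v ∈ (insert b s).filter (fun v => i < v), a v) * (1 - q ^ a i))
        = 1 - q ^ (∑ v ∈ s, a v) := by
      rw [← ih]
      exact Finset.sum_congr rfl (fun i hi => by rw [hterm i hi])
    rw [hsum]
    have hfb : (insert b s).filter (fun v => b < v) = s := by
      rw [Finset.filter_insert, if_neg (lt_irrefl b)]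
      exact Finset.filter_true_of_mem (fun x hx => hb x hx)
    rw [hfb, Finset.sum_insert hbs, zpow_add₀ q_ne]
    ring

lemma partB_inner {n : ℕ} (a : Fin n → ℤ) (I' : Finset (Fin n)) (hne : I'.Nonempty)
    (g : Finset (Fin n) → ℤ)
    (hg : ∀ J ⊆ I', g J = g ∅ - ∑ j ∈ J, (((I'.filter (fun u => u ≤ j)).card : ℤ) - 1) * a j) :
    ∑ J ∈ I'.powerset.filter (fun J => J.Nonempty), (-1 : RatFunc ℚ) ^ J.card * q ^ (g J)
      = - q ^ (g ∅) := by
  classical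
  set x : Fin n → RatFunc ℚ := fun j => q ^ (-((((I'.filter (fun u => u ≤ j)).card : ℤ) - 1) * a j))
    with hx
  have hfull : ∑ J ∈ I'.powerset, (-1 : RatFunc ℚ) ^ J.card * q ^ (g J) = 0 := by
    have hterm : ∀ J ∈ I'.powerset, (-1 : RatFunc ℚ) ^ J.card * q ^ (g J)
        = q ^ (g ∅) * ((∏ j ∈ J, (-(x j))) * ∏ j ∈ I' \ J, (1 : RatFunc ℚ)) := by
      intro J hJ
      rw [Finset.mem_powerset] at hJ
      have : g J = g ∅ + ∑ j ∈ J, (-((((I'.filter (fun u => u ≤ j)).card : ℤ) - 1) * a j)) := by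
        rw [hg J hJ]
        rw [Finset.sum_neg_distrib]
        ring
      rw [this, zpow_add₀ q_ne, q_zpow_sum]
      have hneg : (∏ j ∈ J, (-(x j))) = (-1 : RatFunc ℚ) ^ J.card * ∏ j ∈ J, x j := by
        rw [← Finset.prod_const, ← Finset.prod_mul_distrib]
        simp
      rw [hneg, hx]
      simp only [Finset.prod_const_one]
      ring
    rw [Finset.sum_congr rfl hterm, ← Finset.mul_sum, ← Finset.prod_add]
    have hmin : I'.min' hne ∈ I' := Finset.min'_mem _ _
    have hfmin : I'.filter (fun u => u ≤ I'.min' hne) = {I'.min' hne} := by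
      ext u
      simp only [Finset.mem_filter, Finset.mem_singleton]
      constructor
      · rintro ⟨hu, hle⟩
        exact le_antisymm hle (Finset.min'_le _ _ hu)
      · rintro rfl
        exact ⟨hmin, le_refl _⟩
    apply mul_eq_zero_of_right
    apply Finset.prod_eq_zero hmin
    have hx1 : x (I'.min' hne) = 1 := by
      rw [hx]
      simp only [hfmin, Finset.card_singleton]
      norm_num
    rw [hx1]
    ring
  have hsplit := Finset.sum_filter_add_sum_filter_not I'.powerset (fun J => J.Nonempty)
      (fun J => (-1 : RatFunc ℚ) ^ J.card * q ^ (g J))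
  have hempty : I'.powerset.filter (fun J => ¬ J.Nonempty) = {∅} := by
    ext J
    simp only [Finset.mem_filter, Finset.mem_powerset, Finset.not_nonempty_iff_eq_empty,
      Finset.mem_singleton]
    constructor
    · tauto
    · rintro rfl
      exact ⟨Finset.empty_subset _, rfl⟩
  rw [hempty] at hsplit
  simp only [Finset.sum_singleton, Finset.card_empty, pow_zero, one_mul] at hsplit
  rw [hfull] at hsplit
  linear_combination hsplit

lemma reindex {n : ℕ} {M : Type*} [AddCommMonoid M] (I : Finset (Fin n))
    (F : Fin n → Finset (Fin n) → M) :
    ∑ i ∈ I, ∑ J ∈ (I.erase i).powerset.filter (fun J => J.Nonempty), F i (insert i J)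
      = ∑ K ∈ I.powerset.filter (fun K => 2 ≤ K.card), ∑ i ∈ K, F i K := by
  classical
  rw [Finset.sum_sigma', Finset.sum_sigma']
  apply Finset.sum_nbij'
    (i := fun p => (⟨insert p.1 p.2, p.1⟩ : Σ _ : Finset (Fin n), Fin n))
    (j := fun p => (⟨p.2, p.1.erase p.2⟩ : Σ _ : Fin n, Finset (Fin n)))
  · rintro ⟨i, J⟩ hp
    simp only [Finset.mem_sigma, Finset.mem_filter, Finset.mem_powerset] at hp ⊢
    obtain ⟨hi, hJ, hne⟩ := hp
    have hiJ : i ∉ J := fun h => (Finset.ne_of_mem_erase (hJ h)) rfl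
    refine ⟨⟨Finset.insert_subset hi (hJ.trans (Finset.erase_subset _ _)), ?_⟩,
      Finset.mem_insert_self _ _⟩
    rw [Finset.card_insert_of_notMem hiJ]
    have := Finset.Nonempty.card_pos hne
    omega
  · rintro ⟨K, x⟩ hp
    simp only [Finset.mem_sigma, Finset.mem_filter, Finset.mem_powerset] at hp ⊢
    obtain ⟨⟨hK, hcard⟩, hx⟩ := hp
    refine ⟨hK hx, Finset.erase_subset_erase _ hK, ?_⟩
    rw [← Finset.card_pos, Finset.card_erase_of_mem hx]
    omega
  · rintro ⟨i, J⟩ hp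
    simp only [Finset.mem_sigma, Finset.mem_filter, Finset.mem_powerset] at hp
    obtain ⟨hi, hJ, hne⟩ := hp
    have hiJ : i ∉ J := fun h => (Finset.ne_of_mem_erase (hJ h)) rfl
    simp [Finset.erase_insert hiJ]
  · rintro ⟨K, x⟩ hp
    simp only [Finset.mem_sigma, Finset.mem_filter, Finset.mem_powerset] at hp
    simp [Finset.insert_erase hp.2]
  · rintro ⟨i, J⟩ _
    rfl

/-- Summand for the regrouped "Part A". -/
noncomputable def FA {n : ℕ} (I : Finset (Fin n)) (a : Fin n → ℤ) (r : ℤ)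
    (i : Fin n) (K : Finset (Fin n)) : RatFunc ℚ :=
  (-1) ^ K.card * q ^ (Lsum I K a + ∑ v ∈ K.filter (fun v => i < v), a v) * (1 - q ^ a i) /
    (1 - q ^ ((∑ j, a j) - (∑ j ∈ K, a j) + r))

/-- Proposition 5.4: for `I ⊆ {1,…,n}` with `|I| ≥ 2`, positive integers `a_i` and `r ≥ 1`,
`∑_{i ∈ I} ∑_{∅ ≠ J ⊆ I∖{i}} (-1)^{|J|+1} q^{∑_{j>i} a_j + L_{I∖{i},J}(a^{(i)})}
  (1-q^{a_i})(1-q^{a_J}) / ((1-q^{|a|-a_i+r})(1-q^{|a|-a_i-a_J+r}))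
= ∑_{∅ ≠ J ⊆ I} (-1)^{|J|} q^{L_{I,J}(a)} (1-q^{a_J}) / (1-q^{|a|-a_J+r})`. -/
theorem double_sum_reduction (n : ℕ) (I : Finset (Fin n)) (hI : 2 ≤ I.card)
    (a : Fin n → ℤ) (ha : ∀ i, 0 < a i) (r : ℤ) (hr : 1 ≤ r) :
    ∑ i ∈ I, ∑ J ∈ (I.erase i).powerset.filter (fun J => J.Nonempty),
        (-1 : RatFunc ℚ) ^ (J.card + 1) *
          q ^ ((∑ j ∈ Finset.univ.filter (fun j => i < j), a j) + LsumDel i I J a) *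
          ((1 - q ^ a i) * (1 - q ^ (∑ j ∈ J, a j))) /
          ((1 - q ^ ((∑ j, a j) - a i + r)) * (1 - q ^ ((∑ j, a j) - a i - (∑ j ∈ J, a j) + r))) =
      ∑ J ∈ I.powerset.filter (fun J => J.Nonempty),
        (-1 : RatFunc ℚ) ^ J.card * q ^ (Lsum I J a) * (1 - q ^ (∑ j ∈ J, a j)) /
          (1 - q ^ ((∑ j, a j) - (∑ j ∈ J, a j) + r)) := by
  classical
  have hle : ∀ S : Finset (Fin n), (∑ j ∈ S, a j) ≤ ∑ j, a j := fun S =>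
    Finset.sum_le_sum_of_subset_of_nonneg (Finset.subset_univ S) (fun i _ _ => (ha i).le)
  have hD : ∀ S : Finset (Fin n),
      (1 : RatFunc ℚ) - q ^ ((∑ j, a j) - (∑ j ∈ S, a j) + r) ≠ 0 := by
    intro S
    apply one_sub_qpow_ne
    have := hle S
    omega
  -- the per-term partial fraction decomposition
  have hterm : ∀ i ∈ I, ∀ J ∈ (I.erase i).powerset.filter (fun J => J.Nonempty),
      (-1 : RatFunc ℚ) ^ (J.card + 1) *
          q ^ ((∑ j ∈ Finset.univ.filter (fun j => i < j), a j) + LsumDel i I J a) *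
          ((1 - q ^ a i) * (1 - q ^ (∑ j ∈ J, a j))) /
          ((1 - q ^ ((∑ j, a j) - a i + r)) * (1 - q ^ ((∑ j, a j) - a i - (∑ j ∈ J, a j) + r)))
        = FA I a r i (insert i J)
          + ((-1 : RatFunc ℚ) ^ J.card *
              q ^ (((∑ j ∈ Finset.univ.filter (fun j => i < j), a j) + LsumDel i I J a)
                + (∑ j ∈ J, a j))) *
            ((1 - q ^ a i) / (1 - q ^ ((∑ j, a j) - a i + r))) := by
    intro i hi J hJm
    rw [Finset.mem_filter, Finset.mem_powerset] at hJm
    obtain ⟨hJ, hne⟩ := hJm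
    have hiJ : i ∉ J := fun h => (Finset.ne_of_mem_erase (hJ h)) rfl
    have hZ : (1 : RatFunc ℚ) - q ^ ((∑ j, a j) - a i + r) ≠ 0 := by
      have h := hD {i}
      rw [Finset.sum_singleton] at h
      exact h
    have hW : (1 : RatFunc ℚ) - q ^ ((∑ j, a j) - a i - (∑ j ∈ J, a j) + r) ≠ 0 := by
      have h := hD (insert i J)
      rw [Finset.sum_insert hiJ] at h
      rw [show (∑ j, a j) - a i - (∑ j ∈ J, a j) + r
          = (∑ j, a j) - (a i + ∑ j ∈ J, a j) + r by ring]
      exact h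
    have hYW : q ^ (∑ j ∈ J, a j) * q ^ ((∑ j, a j) - a i - (∑ j ∈ J, a j) + r)
        = q ^ ((∑ j, a j) - a i + r) := by
      rw [← zpow_add₀ q_ne]
      congr 1
      ring
    rw [pf_key ((-1 : RatFunc ℚ) ^ (J.card + 1) *
        q ^ ((∑ j ∈ Finset.univ.filter (fun j => i < j), a j) + LsumDel i I J a))
        (q ^ a i) (q ^ (∑ j ∈ J, a j)) (q ^ ((∑ j, a j) - a i + r))
        (q ^ ((∑ j, a j) - a i - (∑ j ∈ J, a j) + r)) hZ hW hYW]
    congr 1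
    · unfold FA
      rw [exponent_A i I J a hi hJ, Finset.card_insert_of_notMem hiJ, Finset.sum_insert hiJ,
        show (∑ j, a j) - (a i + ∑ j ∈ J, a j) + r
          = (∑ j, a j) - a i - (∑ j ∈ J, a j) + r by ring]
    · rw [zpow_add₀ q_ne
        ((∑ j ∈ Finset.univ.filter (fun j => i < j), a j) + LsumDel i I J a) (∑ j ∈ J, a j),
        pow_succ]
      ring
  rw [Finset.sum_congr rfl (fun i hi => Finset.sum_congr rfl (fun J hJ => hterm i hi J hJ))]
  simp only [Finset.sum_add_distrib]
  -- Part A : reindex and telescope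
  rw [reindex I (FA I a r)]
  -- Part B : inner alternating sum collapses
  have hBi : ∀ i ∈ I,
      ∑ J ∈ (I.erase i).powerset.filter (fun J => J.Nonempty),
        ((-1 : RatFunc ℚ) ^ J.card *
            q ^ (((∑ j ∈ Finset.univ.filter (fun j => i < j), a j) + LsumDel i I J a)
              + (∑ j ∈ J, a j))) *
          ((1 - q ^ a i) / (1 - q ^ ((∑ j, a j) - a i + r)))
        = (-1 : RatFunc ℚ) ^ ({i} : Finset (Fin n)).card * q ^ (Lsum I {i} a) *
            (1 - q ^ (∑ j ∈ ({i} : Finset (Fin n)), a j)) /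
            (1 - q ^ ((∑ j, a j) - (∑ j ∈ ({i} : Finset (Fin n)), a j) + r)) := by
    intro i hi
    rw [← Finset.sum_mul]
    have hne : (I.erase i).Nonempty := by
      rw [← Finset.card_pos, Finset.card_erase_of_mem hi]
      omega
    have hg : ∀ J ⊆ I.erase i,
        (fun J => ((∑ j ∈ Finset.univ.filter (fun j => i < j), a j) + LsumDel i I J a)
          + (∑ j ∈ J, a j)) J
        = (fun J => ((∑ j ∈ Finset.univ.filter (fun j => i < j), a j) + LsumDel i I J a)
          + (∑ j ∈ J, a j)) ∅
          - ∑ j ∈ J, ((((I.erase i).filter (fun u => u ≤ j)).card : ℤ) - 1) * a j := by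
      intro J hJ
      simp only
      rw [LsumDel_diff i I J a hJ, Finset.sum_empty]
      rw [show (∑ j ∈ J, ((((I.erase i).filter (fun u => u ≤ j)).card : ℤ) - 1) * a j)
          = (∑ j ∈ J, (((I.erase i).filter (fun u => u ≤ j)).card : ℤ) * a j) - ∑ j ∈ J, a j by
        rw [← Finset.sum_sub_distrib]
        exact Finset.sum_congr rfl (fun j _ => by ring)]
      ring
    rw [partB_inner a (I.erase i) hne _ hg]
    simp only [LsumDel, Finset.sum_empty, add_zero]
    have hL : Lsum I {i} a
        = (∑ j ∈ Finset.univ.filter (fun j => i < j), a j) + LsumDel i I ∅ a :=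
      Lsum_singleton i I a hi
    rw [show ((∑ j ∈ Finset.univ.filter (fun j => i < j), a j)
        + ∑ u ∈ I.erase i, ∑ v ∈ Finset.univ.filter
            (fun v => u ≤ v ∧ v ∉ (∅ : Finset (Fin n)) ∧ v ≠ i), a v)
        = Lsum I {i} a by rw [hL]; rfl]
    rw [Finset.sum_singleton, Finset.card_singleton, pow_one]
    ring
  rw [Finset.sum_congr rfl hBi]
  -- Part A per-K evaluation
  have hKA : ∀ K ∈ I.powerset.filter (fun K => 2 ≤ K.card),
      ∑ i ∈ K, FA I a r i K
        = (-1 : RatFunc ℚ) ^ K.card * q ^ (Lsum I K a) * (1 - q ^ (∑ j ∈ K, a j)) /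
            (1 - q ^ ((∑ j, a j) - (∑ j ∈ K, a j) + r)) := by
    intro K _
    have hstep : ∀ i ∈ K, FA I a r i K
        = ((-1 : RatFunc ℚ) ^ K.card * q ^ (Lsum I K a) /
            (1 - q ^ ((∑ j, a j) - (∑ j ∈ K, a j) + r))) *
          (q ^ (∑ v ∈ K.filter (fun v => i < v), a v) * (1 - q ^ a i)) := by
      intro i _
      unfold FA
      rw [zpow_add₀ q_ne]
      ring
    rw [Finset.sum_congr rfl hstep, ← Finset.mul_sum, telescope a K]
    ring
  rw [Finset.sum_congr rfl hKA]
  -- Now split the RHS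
  have hsplit := Finset.sum_filter_add_sum_filter_not (I.powerset.filter (fun J => J.Nonempty))
      (fun J => J.card = 1)
      (fun J => (-1 : RatFunc ℚ) ^ J.card * q ^ (Lsum I J a) * (1 - q ^ (∑ j ∈ J, a j)) /
          (1 - q ^ ((∑ j, a j) - (∑ j ∈ J, a j) + r)))
  have hset1 : (I.powerset.filter (fun J => J.Nonempty)).filter (fun J => J.card = 1)
      = I.powerset.filter (fun J => J.card = 1) := by
    ext K
    simp only [Finset.mem_filter, Finset.mem_powerset]
    constructor
    · rintro ⟨⟨h1, _⟩, h3⟩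
      exact ⟨h1, h3⟩
    · rintro ⟨h1, h3⟩
      exact ⟨⟨h1, Finset.card_pos.mp (by omega)⟩, h3⟩
  have hset2 : (I.powerset.filter (fun J => J.Nonempty)).filter (fun J => ¬ J.card = 1)
      = I.powerset.filter (fun J => 2 ≤ J.card) := by
    ext K
    simp only [Finset.mem_filter, Finset.mem_powerset]
    constructor
    · rintro ⟨⟨h1, h2⟩, h3⟩
      have := Finset.Nonempty.card_pos h2
      exact ⟨h1, by omega⟩
    · rintro ⟨h1, h3⟩
      exact ⟨⟨h1, Finset.card_pos.mp (by omega)⟩, by omega⟩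
  rw [hset1, hset2] at hsplit
  rw [← hsplit]
  -- the singleton part
  have himg : I.powerset.filter (fun J => J.card = 1) = I.image (fun i => ({i} : Finset (Fin n))) := by
    ext K
    simp only [Finset.mem_filter, Finset.mem_powerset, Finset.mem_image]
    constructor
    · rintro ⟨hsub, hcard⟩
      rcases Finset.card_eq_one.mp hcard with ⟨b, rfl⟩
      exact ⟨b, Finset.singleton_subset_iff.mp hsub, rfl⟩
    · rintro ⟨b, hb, rfl⟩
      exact ⟨Finset.singleton_subset_iff.mpr hb, Finset.card_singleton b⟩
  rw [himg, Finset.sum_image (fun x _ y _ h => Finset.singleton_injective h)]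
  ring
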